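/- Let r_j and r_ℓ be requests with j>ℓ, and suppose v_j−ρ(j)+1 ≤ u^s_ℓ ≤ v_j (the tail of request ℓ is in the range of the quarter ball of request j). Then t_j−ρ(j) ≥ t_ℓ+4·ρ(ℓ). -/
import Mathlib


open Finset

/-- A replica is a pair `(v, t)` of a network node and a time. -/
abbrev Replica : Type := ℕ × ℕ

/-- A (directed) grid edge is a pair of replicas. -/
abbrev GEdge : Type := Replica × Replica

/-- Horizontal directed edge `((v,t),(v+1,t))`. -/
def isHoriz (e : GEdge) : Prop := e.2 = (e.1.1 + 1, e.1.2)

/-- Vertical arc `((v,t),(v,t+1))`. -/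
def isArc (e : GEdge) : Prop := e.2 = (e.1.1, e.1.2 + 1)

def isGridEdge (e : GEdge) : Prop := isHoriz e ∨ isArc e

/-- The quarter ball `B(r,ρ)`: replicas `(u,s)` with `u ≤ v`, `s ≤ t` and
`(v−u)+(t−s) ≤ ρ`. -/
def qball (r : Replica) (ρ : ℕ) : Set Replica :=
  {q | q.1 ≤ r.1 ∧ q.2 ≤ r.2 ∧ (r.1 - q.1) + (r.2 - q.2) ≤ ρ}

/-- Grid edges with both endpoints in the quarter ball `B(r,ρ)`. -/
def ballEdge (r : Replica) (ρ : ℕ) (e : GEdge) : Prop :=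
  isGridEdge e ∧ e.1 ∈ qball r ρ ∧ e.2 ∈ qball r ρ

/-- Two quarter balls are edge-disjoint if they share no grid edge. -/
def BallsEdgeDisjoint (r : Replica) (ρ : ℕ) (r' : Replica) (ρ' : ℕ) : Prop :=
  ∀ e : GEdge, ¬ (ballEdge r ρ e ∧ ballEdge r' ρ' e)

/-- The square `Sq(r,ρ) = [v−ρ,v] × [t−ρ,t]`. -/
def SqRect (r : Replica) (ρ : ℕ) : Set Replica :=
  {q | r.1 - ρ ≤ q.1 ∧ q.1 ≤ r.1 ∧ r.2 - ρ ≤ q.2 ∧ q.2 ≤ r.2}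

/-- Directed `L∞` distance `d∞(q,r)`: `max(v−u, t−s)` if `u ≤ v` and `s ≤ t`,
and `∞` otherwise. -/
def distInf (q r : Replica) : ℕ∞ :=
  if q.1 ≤ r.1 ∧ q.2 ≤ r.2 then ((max (r.1 - q.1) (r.2 - q.2) : ℕ) : ℕ∞) else ⊤

/-- The replicas of an edge set: `(0,0)` together with all endpoints of its edges. -/
def Repl (F : Finset GEdge) : Set Replica :=
  insert ((0, 0) : Replica) {q | ∃ e ∈ F, q = e.1 ∨ q = e.2}

/-- The arcs of the vertical path at node `u` from time `s` to time `τ`. -/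
def vertPath (u s τ : ℕ) : Finset GEdge :=
  (Finset.range (τ - s)).image (fun k => ((u, s + k), (u, s + k + 1)))

/-- The horizontal edges of the path at time `τ` from node `u` to node `w`. -/
def horizPath (τ u w : ℕ) : Finset GEdge :=
  (Finset.range (w - u)).image (fun k => ((u + k, τ), (u + k + 1, τ)))

/-- A directed path from `a` to `b` all of whose edges belong to `F`. -/
def PathIn (F : Finset GEdge) (a b : Replica) : Prop :=
  ∃ (L : ℕ) (f : ℕ → Replica), f 0 = a ∧ f L = b ∧ ∀ k < L, (f k, f (k + 1)) ∈ F

/-- An execution of Algorithm `Square` on a request sequence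
`r_1 = (v 1, t 1), …, r_N = (v N, t N)` (with `t 0 = 0` and nondecreasing times).
`sol i` is the edge set after handling request `i`; `ρ i` is the radius of
request `i`; `(u' i, s' i)` is its closest replica and `(us i, ss i)` its
serving replica.  The fields record the specification SQ1–SQ5. -/
structure SquareRun where
  N : ℕ
  v : ℕ → ℕ
  t : ℕ → ℕ
  ρ : ℕ → ℕ
  u' : ℕ → ℕ
  s' : ℕ → ℕ
  us : ℕ → ℕ
  ss : ℕ → ℕ
  sol : ℕ → Finset GEdge
  t_zero : t 0 = 0
  t_mono : ∀ i j, i ≤ j → j ≤ N → t i ≤ t j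
  sol_zero : sol 0 = ∅
  /-- SQ2: `ρ i` is a lower bound on the distance from every replica of the
  current solution (after the SQ1 additions) to `r_i`. -/
  rho_min : ∀ i, 1 ≤ i → i ≤ N →
    ∀ q ∈ Repl (sol (i - 1) ∪ vertPath 0 (t (i - 1)) (t i)),
      (ρ i : ℕ∞) ≤ distInf q (v i, t i)
  /-- SQ2: the closest replica belongs to the current solution. -/
  closest_mem : ∀ i, 1 ≤ i → i ≤ N →
    (u' i, s' i) ∈ Repl (sol (i - 1) ∪ vertPath 0 (t (i - 1)) (t i))
  /-- SQ2: the closest replica attains the radius. -/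
  closest_dist : ∀ i, 1 ≤ i → i ≤ N →
    distInf (u' i, s' i) (v i, t i) = (ρ i : ℕ∞)
  /-- SQ2: among replicas of node `u' i`, the closest replica is the latest. -/
  closest_late : ∀ i, 1 ≤ i → i ≤ N → ∀ s, s ≤ t i →
    (u' i, s) ∈ Repl (sol (i - 1) ∪ vertPath 0 (t (i - 1)) (t i)) → s ≤ s' i
  /-- SQ3: the serving replica is in the current solution and in `Sq(r_i, 5ρ i)`. -/
  serv_mem : ∀ i, 1 ≤ i → i ≤ N →
    (us i, ss i) ∈ Repl (sol (i - 1) ∪ vertPath 0 (t (i - 1)) (t i)) ∧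
      (us i, ss i) ∈ SqRect (v i, t i) (5 * ρ i)
  /-- SQ3: the serving node is leftmost. -/
  serv_min : ∀ i, 1 ≤ i → i ≤ N →
    ∀ q ∈ Repl (sol (i - 1) ∪ vertPath 0 (t (i - 1)) (t i)),
      q ∈ SqRect (v i, t i) (5 * ρ i) → us i ≤ q.1
  /-- SQ3: among those, the serving time is latest. -/
  serv_late : ∀ i, 1 ≤ i → i ≤ N →
    ∀ q ∈ Repl (sol (i - 1) ∪ vertPath 0 (t (i - 1)) (t i)),
      q ∈ SqRect (v i, t i) (5 * ρ i) → q.1 = us i → q.2 ≤ ss i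
  /-- SQ1 + SQ4 + SQ5: the edges added while handling request `i`. -/
  step : ∀ i, 1 ≤ i → i ≤ N →
    sol i = (sol (i - 1) ∪ vertPath 0 (t (i - 1)) (t i))
      ∪ vertPath (us i) (ss i) (t i) ∪ horizPath (t i) (us i) (v i)
      ∪ vertPath (us i) (t i) (t i + 4 * ρ i)

namespace SquareRun

variable (S : SquareRun)

/-- The `i`-th request replica. -/
def req (i : ℕ) : Replica := (S.v i, S.t i)

/-- The edges added in steps SQ4 and SQ5 while handling request `i`. -/
def added45 (i : ℕ) : Finset GEdge :=
  vertPath (S.us i) (S.ss i) (S.t i) ∪ horizPath (S.t i) (S.us i) (S.v i)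
    ∪ vertPath (S.us i) (S.t i) (S.t i + 4 * S.ρ i)

/-- Request `i` is covered if `v_i − u^s_i ≥ ρ(i)`. -/
def covered (i : ℕ) : Prop := S.ρ i ≤ S.v i - S.us i

def uncovered (i : ℕ) : Prop := ¬ S.covered i

/-- A feasible solution of the DMCD instance given by the requests of `S`. -/
def Feasible (F : Finset GEdge) : Prop :=
  (∀ e ∈ F, isGridEdge e) ∧
  (∀ i, 1 ≤ i → i ≤ S.N → PathIn F (0, 0) (S.req i)) ∧
  (∀ τ, τ < S.t S.N → ∃ w, ((w, τ), (w, τ + 1)) ∈ F)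

/-- `S.IsParent i j` means `parent(j) = i`:  `i` is the least index greater than
`j` such that `r_i` is uncovered and `SQball(j)`, `SQball(i)` are not
edge-disjoint. -/
def IsParent (i j : ℕ) : Prop :=
  1 ≤ j ∧ j < i ∧ i ≤ S.N ∧ S.uncovered j ∧ S.uncovered i ∧
    ¬ BallsEdgeDisjoint (S.req j) (S.ρ j) (S.req i) (S.ρ i) ∧
    ∀ k, j < k → k < i → S.uncovered k →
      BallsEdgeDisjoint (S.req j) (S.ρ j) (S.req k) (S.ρ k)

/-- A root: an uncovered request with no parent. -/
def IsRoot (i : ℕ) : Prop :=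
  1 ≤ i ∧ i ≤ S.N ∧ S.uncovered i ∧
    ∀ j, i < j → j ≤ S.N → S.uncovered j →
      BallsEdgeDisjoint (S.req i) (S.ρ i) (S.req j) (S.ρ j)

/-- `i ∈ Tree(iStar)`: one can go from `i` to `iStar` by repeatedly passing from
a child to its parent. -/
def InTree (i iStar : ℕ) : Prop :=
  Relation.ReflTransGen (fun a b => S.IsParent b a) i iStar

end SquareRun

lemma repl_mono' {F G : Finset GEdge} (h : F ⊆ G) : Repl F ⊆ Repl G := by
  intro q hq
  rcases hq with hq | ⟨e, he, hq⟩
  · rw [hq]; exact Set.mem_insert _ _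
  · exact Set.mem_insert_iff.mpr (Or.inr ⟨e, h he, hq⟩)

lemma snd_mem_repl {F : Finset GEdge} {e : GEdge} (he : e ∈ F) : e.2 ∈ Repl F :=
  Set.mem_insert_iff.mpr (Or.inr ⟨e, he, Or.inr rfl⟩)

lemma mem_vertPath_of {u s τ x : ℕ} (h1 : s < x) (h2 : x ≤ τ) :
    (((u, x - 1), (u, x)) : GEdge) ∈ vertPath u s τ := by
  simp only [vertPath, Finset.mem_image, Finset.mem_range]
  refine ⟨x - s - 1, by omega, ?_⟩
  have h3 : s + (x - s - 1) = x - 1 := by omega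
  rw [h3]
  have h4 : x - 1 + 1 = x := by omega
  rw [h4]

lemma SquareRun.sol_mono (S : SquareRun) : ∀ m ≤ S.N, ∀ i ≤ m, S.sol i ⊆ S.sol m := by
  intro m
  induction m with
  | zero => intro _ i hi; interval_cases i; exact subset_rfl
  | succ m ih =>
    intro hm i hi
    rcases Nat.lt_or_ge i (m + 1) with h | h
    · have hsub : S.sol i ⊆ S.sol m := ih (by omega) i (by omega)
      have hstep := S.step (m + 1) (by omega) hm
      simp only [Nat.add_sub_cancel] at hstep
      intro e he
      rw [hstep]
      simp only [Finset.mem_union]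
      exact Or.inl (Or.inl (Or.inl (Or.inl (hsub he))))
    · have : i = m + 1 := by omega
      subst this; exact subset_rfl

/-- If the tail of request `ℓ` is in the range of the quarter ball of request
`j > ℓ`, i.e. `v_j − ρ(j) + 1 ≤ u^s_ℓ ≤ v_j`, then
`t_j − ρ(j) ≥ t_ℓ + 4ρ(ℓ)`. -/
theorem ball_later_than_tail (S : SquareRun) (j ℓ : ℕ)
    (hℓ1 : 1 ≤ ℓ) (hℓj : ℓ < j) (hjN : j ≤ S.N)
    (h1 : (S.v j : ℤ) - S.ρ j + 1 ≤ (S.us ℓ : ℤ)) (h2 : S.us ℓ ≤ S.v j) :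
    (S.t ℓ : ℤ) + 4 * S.ρ ℓ ≤ (S.t j : ℤ) - S.ρ j := by
  set s0 := min (S.t j) (S.t ℓ + 4 * S.ρ ℓ) with hs0
  have hℓN : ℓ ≤ S.N := by omega
  have htlj : S.t ℓ ≤ S.t j := S.t_mono ℓ j (le_of_lt hℓj) hjN
  have hss : S.ss ℓ ≤ S.t ℓ := (S.serv_mem ℓ hℓ1 hℓN).2.2.2.2
  have hstepℓ := S.step ℓ hℓ1 hℓN
  have hsolsub : S.sol ℓ ⊆ S.sol (j - 1) := S.sol_mono (j - 1) (by omega) ℓ (by omega)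
  have hsub : S.sol ℓ ⊆ S.sol (j - 1) ∪ vertPath 0 (S.t (j - 1)) (S.t j) :=
    hsolsub.trans Finset.subset_union_left
  -- membership of (us ℓ, s0)
  have hmem : ((S.us ℓ, s0) : Replica) ∈
      Repl (S.sol (j - 1) ∪ vertPath 0 (S.t (j - 1)) (S.t j)) := by
    rcases Nat.lt_or_ge (S.ss ℓ) s0 with hlt | hge
    · rcases le_or_gt s0 (S.t ℓ) with hle | hgt
      · have hedge : (((S.us ℓ, s0 - 1), (S.us ℓ, s0)) : GEdge) ∈
            vertPath (S.us ℓ) (S.ss ℓ) (S.t ℓ) := mem_vertPath_of hlt hle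
        have : (((S.us ℓ, s0 - 1), (S.us ℓ, s0)) : GEdge) ∈ S.sol ℓ := by
          rw [hstepℓ]; simp only [Finset.mem_union]; tauto
        exact repl_mono' hsub (snd_mem_repl this)
      · have hle2 : s0 ≤ S.t ℓ + 4 * S.ρ ℓ := min_le_right _ _
        have hedge : (((S.us ℓ, s0 - 1), (S.us ℓ, s0)) : GEdge) ∈
            vertPath (S.us ℓ) (S.t ℓ) (S.t ℓ + 4 * S.ρ ℓ) := mem_vertPath_of hgt hle2
        have : (((S.us ℓ, s0 - 1), (S.us ℓ, s0)) : GEdge) ∈ S.sol ℓ := by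
          rw [hstepℓ]; simp only [Finset.mem_union]; tauto
        exact repl_mono' hsub (snd_mem_repl this)
    · have heq : s0 = S.ss ℓ := by
        have : S.ss ℓ ≤ s0 := le_min (hss.trans htlj) (hss.trans (by omega))
        omega
      rw [heq]
      have hm := (S.serv_mem ℓ hℓ1 hℓN).1
      have hsub2 : S.sol (ℓ - 1) ∪ vertPath 0 (S.t (ℓ - 1)) (S.t ℓ) ⊆ S.sol ℓ := by
        intro e he; rw [hstepℓ]; simp only [Finset.mem_union]
        simp only [Finset.mem_union] at he; tauto
      exact repl_mono' (hsub2.trans hsub) hm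
  have hr := S.rho_min j (by omega) hjN _ hmem
  have hs0le : s0 ≤ S.t j := min_le_left _ _
  rw [distInf] at hr
  rw [if_pos ⟨h2, hs0le⟩] at hr
  have hr' : S.ρ j ≤ max (S.v j - S.us ℓ) (S.t j - s0) := by exact_mod_cast hr
  have hmin : s0 = min (S.t j) (S.t ℓ + 4 * S.ρ ℓ) := hs0
  omega
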